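/- Let γ > 1, r₀ > 0, c₀ > 0 and define r(t) := r₀ + c₀ t, y(t) := −(2/(γ+1)) · r₀/r(t), k(t) := (r₀/c₀) · ln(r(t)/r₀). Define A(t) := 1/((γ+1)c₀) · (r₀/r(t))² · ln(r(t)/r₀), B(t) := (1/c₀) · [ (γ+9)/(γ+1)² · r₀/r(t) − (γ+9)/(γ+1)² · (r₀/r(t))² − 5/(γ+1) · (r₀/r(t))² · ln(r(t)/r₀) ], and C(t) := (r₀/c₀²) · [ −(γ+9)/(2(γ+1)) · ln(r(t)/r₀) + (5γ+17)/(2(γ+1)) · (1 − r₀/r(t)) − (2γ+4)/(γ+1) · (r₀/r(t)) · ln(r(t)/r₀) ]. Then for all t ≥ 0: (i) A(t) = −k(t)·y(t)/(2r(t)); (ii) B'(t) = −(c₀/r(t))·B(t) + 5/(γ+1) · (1/r₀) · (r₀/r(t))³ · ln(r(t)/r₀) − 4(γ−1)/(γ+1)² · (1/r₀) · (r₀/r(t))³, with B(0) = 0; (iii) C'(t) = −((γ+1)/2)·B(t) + ((3−γ)/2)·A(t), with C(0) = 0. -/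

import Mathlib

noncomputable section

open Real

set_option maxHeartbeats 1000000 in
/-- For the constant background state, the explicit second-order data
`A = T²w`, `B = T²w̄`, `C = Tκ` on `C₀` satisfy:
(i) `A = -k·y/(2r)`;
(ii) `B' = -(c₀/r)B + (5/(γ+1))(1/r₀)(r₀/r)³ln(r/r₀) - (4(γ-1)/(γ+1)²)(1/r₀)(r₀/r)³`,
`B(0) = 0`;
(iii) `C' = -((γ+1)/2)B + ((3-γ)/2)A`, `C(0) = 0`. -/
theorem constant_state_second_order_data
    (γ r₀ c₀ : ℝ) (hγ : 1 < γ) (hr₀ : 0 < r₀) (hc₀ : 0 < c₀)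
    (r y k A B C : ℝ → ℝ)
    (hr : ∀ t, r t = r₀ + c₀ * t)
    (hy : ∀ t, y t = -(2 / (γ + 1)) * (r₀ / r t))
    (hk : ∀ t, k t = (r₀ / c₀) * Real.log (r t / r₀))
    (hA : ∀ t, A t = 1 / ((γ + 1) * c₀) * (r₀ / r t) ^ 2 * Real.log (r t / r₀))
    (hB : ∀ t, B t = (1 / c₀) *
      ((γ + 9) / (γ + 1) ^ 2 * (r₀ / r t)
        - (γ + 9) / (γ + 1) ^ 2 * (r₀ / r t) ^ 2
        - 5 / (γ + 1) * (r₀ / r t) ^ 2 * Real.log (r t / r₀)))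
    (hC : ∀ t, C t = (r₀ / c₀ ^ 2) *
      (-(γ + 9) / (2 * (γ + 1)) * Real.log (r t / r₀)
        + (5 * γ + 17) / (2 * (γ + 1)) * (1 - r₀ / r t)
        - (2 * γ + 4) / (γ + 1) * (r₀ / r t) * Real.log (r t / r₀))) :
    (∀ t : ℝ, 0 ≤ t → A t = -(k t * y t) / (2 * r t)) ∧
    (∀ t : ℝ, 0 ≤ t → HasDerivAt B
      (-(c₀ / r t) * B t + 5 / (γ + 1) * (1 / r₀) * (r₀ / r t) ^ 3 * Real.log (r t / r₀)
        - 4 * (γ - 1) / (γ + 1) ^ 2 * (1 / r₀) * (r₀ / r t) ^ 3) t) ∧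
    B 0 = 0 ∧
    (∀ t : ℝ, 0 ≤ t → HasDerivAt C (-((γ + 1) / 2) * B t + ((3 - γ) / 2) * A t) t) ∧
    C 0 = 0 := by
  have hγ1 : γ + 1 ≠ 0 := by nlinarith
  have hc : c₀ ≠ 0 := ne_of_gt hc₀
  have hr0 : r₀ ≠ 0 := ne_of_gt hr₀
  have hrpos : ∀ t : ℝ, 0 ≤ t → 0 < r₀ + c₀ * t := fun t ht => by nlinarith
  have hderivs : ∀ t : ℝ, 0 ≤ t →
      HasDerivAt (fun s => r₀ / (r₀ + c₀ * s)) (-(r₀ * c₀) / (r₀ + c₀ * t) ^ 2) t ∧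
      HasDerivAt (fun s => Real.log ((r₀ + c₀ * s) / r₀)) (c₀ / (r₀ + c₀ * t)) t := by
    intro t ht
    have hsne : r₀ + c₀ * t ≠ 0 := ne_of_gt (hrpos t ht)
    have h1 : HasDerivAt (fun s : ℝ => r₀ + c₀ * s) c₀ t := by
      simpa using ((hasDerivAt_id t).const_mul c₀).const_add r₀
    constructor
    · have := (hasDerivAt_const t r₀).div h1 hsne
      refine this.congr_deriv ?_
      ring
    · have hqne : (r₀ + c₀ * t) / r₀ ≠ 0 := div_ne_zero hsne hr0
      have := (h1.div_const r₀).log hqne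
      convert this using 1
      field_simp
  refine ⟨?_, ?_, ?_, ?_, ?_⟩
  · intro t ht
    have hsne : r₀ + c₀ * t ≠ 0 := ne_of_gt (hrpos t ht)
    rw [hA, hk, hy, hr]
    field_simp
  · intro t ht
    obtain ⟨hu, hL⟩ := hderivs t ht
    have hsne : r₀ + c₀ * t ≠ 0 := ne_of_gt (hrpos t ht)
    have hBf : B = fun s => (1 / c₀) *
        ((γ + 9) / (γ + 1) ^ 2 * (r₀ / (r₀ + c₀ * s))
          - (γ + 9) / (γ + 1) ^ 2 * (r₀ / (r₀ + c₀ * s)) ^ 2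
          - 5 / (γ + 1) * (r₀ / (r₀ + c₀ * s)) ^ 2 * Real.log ((r₀ + c₀ * s) / r₀)) := by
      funext s; rw [hB s, hr s]
    rw [hBf]
    simp only [hr]
    have hD := (((hu.const_mul ((γ + 9) / (γ + 1) ^ 2)).sub
        ((hu.pow 2).const_mul ((γ + 9) / (γ + 1) ^ 2))).sub
        (((hu.pow 2).const_mul (5 / (γ + 1))).mul hL)).const_mul (1 / c₀)
    refine hD.congr_deriv ?_
    simp only [Pi.pow_apply]
    set L := Real.log ((r₀ + c₀ * t) / r₀) with hLdef
    set s := r₀ + c₀ * t with hsdef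
    field_simp
    have hs' : s * s⁻¹ = 1 := mul_inv_cancel₀ hsne
    linear_combination (γ * r₀ * 2 + γ * r₀ * L * 10 + r₀ * 18 + r₀ * L * 10) * hs'
  · rw [hB 0, hr 0]
    simp [hr0]
  · intro t ht
    obtain ⟨hu, hL⟩ := hderivs t ht
    have hsne : r₀ + c₀ * t ≠ 0 := ne_of_gt (hrpos t ht)
    have hCf : C = fun s => (r₀ / c₀ ^ 2) *
        (-(γ + 9) / (2 * (γ + 1)) * Real.log ((r₀ + c₀ * s) / r₀)
          + (5 * γ + 17) / (2 * (γ + 1)) * (1 - r₀ / (r₀ + c₀ * s))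
          - (2 * γ + 4) / (γ + 1) * (r₀ / (r₀ + c₀ * s)) * Real.log ((r₀ + c₀ * s) / r₀)) := by
      funext s; rw [hC s, hr s]
    rw [hCf, hB t, hA t]
    simp only [hr]
    have hD := (((hL.const_mul (-(γ + 9) / (2 * (γ + 1)))).add
        (((hasDerivAt_const t (1:ℝ)).sub hu).const_mul ((5 * γ + 17) / (2 * (γ + 1))))).sub
        ((hu.const_mul ((2 * γ + 4) / (γ + 1))).mul hL)).const_mul (r₀ / c₀ ^ 2)
    refine hD.congr_deriv ?_
    set L := Real.log ((r₀ + c₀ * t) / r₀) with hLdef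
    set s := r₀ + c₀ * t with hsdef
    field_simp
    ring
  · rw [hC 0, hr 0]
    simp [hr0]
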